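/- For all natural numbers p, q, r, s, the scheme G^{p,q,r,s} (◇^p □^q φ ⇒ □^r ◇^s φ) is valid on a Kripke frame if and only if the scheme G^{r,s,p,q} (◇^r □^s φ ⇒ □^p ◇^q φ) is valid on that frame. -/
import Mathlib


def box {W : Type*} (R : W → W → Prop) (φ : W → Prop) (w : W) : Prop :=
  ∀ w', R w w' → φ w'

def dia {W : Type*} (R : W → W → Prop) (φ : W → Prop) (w : W) : Prop :=
  ¬ box R (fun w' => ¬ φ w') w

def boxn {W : Type*} (R : W → W → Prop) : ℕ → (W → Prop) → (W → Prop)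
  | 0, φ => φ
  | (i+1), φ => box R (boxn R i φ)

def dian {W : Type*} (R : W → W → Prop) : ℕ → (W → Prop) → (W → Prop)
  | 0, φ => φ
  | (i+1), φ => dia R (dian R i φ)

def iterR {W : Type*} (R : W → W → Prop) : ℕ → W → W → Prop
  | 0, w, w' => w = w'
  | (i+1), w, w' => ∃ w'', R w w'' ∧ iterR R i w'' w'

lemma boxn_iff {W : Type*} (R : W → W → Prop) (n : ℕ) (φ : W → Prop) (w : W) :
    boxn R n φ w ↔ ∀ u, iterR R n w u → φ u := by
  induction n generalizing w with
  | zero =>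
    simp only [boxn, iterR]
    exact ⟨fun h u e => e ▸ h, fun h => h w rfl⟩
  | succ i ih =>
    simp only [boxn, box, iterR]
    constructor
    · rintro h u ⟨w'', hR, hit⟩
      exact (ih w'').1 (h w'' hR) u hit
    · intro h w' hR
      exact (ih w').2 fun u hit => h u ⟨w', hR, hit⟩

lemma dian_iff {W : Type*} (R : W → W → Prop) (n : ℕ) (φ : W → Prop) (w : W) :
    dian R n φ w ↔ ∃ u, iterR R n w u ∧ φ u := by
  induction n generalizing w with
  | zero =>
    simp only [dian, iterR]
    exact ⟨fun h => ⟨w, rfl, h⟩, fun ⟨u, e, h⟩ => e ▸ h⟩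
  | succ i ih =>
    simp only [dian, dia, box, iterR]
    constructor
    · intro h
      by_contra hc
      push_neg at hc
      exact h fun w' hR hd => by
        obtain ⟨u, hit, hφ⟩ := (ih w').1 hd
        exact hc u ⟨w', hR, hit⟩ hφ
    · rintro ⟨u, ⟨w'', hR, hit⟩, hφ⟩ h
      exact h w'' hR ((ih w'').2 ⟨u, hit, hφ⟩)

lemma geach_iff_conf {W : Type*} (R : W → W → Prop) (p q r s : ℕ) :
    (∀ φ : W → Prop, ∀ w : W, dian R p (boxn R q φ) w → boxn R r (dian R s φ) w) ↔
      (∀ w u v : W, iterR R p w u → iterR R r w v →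
        ∃ x, iterR R q u x ∧ iterR R s v x) := by
  constructor
  · intro h w u v hpu hrv
    have hd : dian R p (boxn R q (fun x => iterR R q u x)) w :=
      (dian_iff R p _ w).2 ⟨u, hpu, (boxn_iff R q _ u).2 fun x hx => hx⟩
    obtain ⟨x, hsx, hqx⟩ := (dian_iff R s _ v).1 ((boxn_iff R r _ w).1 (h _ w hd) v hrv)
    exact ⟨x, hqx, hsx⟩
  · intro h φ w hd
    obtain ⟨u, hpu, hbq⟩ := (dian_iff R p _ w).1 hd
    refine (boxn_iff R r _ w).2 fun v hrv => ?_
    obtain ⟨x, hqx, hsx⟩ := h w u v hpu hrv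
    exact (dian_iff R s φ v).2 ⟨x, hsx, (boxn_iff R q φ u).1 hbq x hqx⟩

theorem geach_valid_iff_dual {W : Type*} [Nonempty W] (R : W → W → Prop)
    (p q r s : ℕ) :
    (∀ φ : W → Prop, ∀ w : W, dian R p (boxn R q φ) w → boxn R r (dian R s φ) w) ↔
      (∀ φ : W → Prop, ∀ w : W, dian R r (boxn R s φ) w → boxn R p (dian R q φ) w) := by
  rw [geach_iff_conf, geach_iff_conf]
  constructor
  · intro h w u v h1 h2
    obtain ⟨x, hx1, hx2⟩ := h w v u h2 h1
    exact ⟨x, hx2, hx1⟩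
  · intro h w u v h1 h2
    obtain ⟨x, hx1, hx2⟩ := h w v u h2 h1
    exact ⟨x, hx2, hx1⟩
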